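/- arXiv:1910.00807 — 4 statements merged into one kernel-verified Lean document; each statement's English description precedes it below -/
import Mathlib

section
/- For integers n ≥ 2 and 0 ≤ l ≤ n-2, the sum ∑_{k=0}^{l} 1/((l-k)! · (n-1)(n-2)⋯(n-1-k)) equals 1/(l! · (n-l-1)). -/
open Finset

theorem stmt_0 (n l : ℕ) (hn : 2 ≤ n) (hl : l ≤ n - 2) :
    ∑ k ∈ Finset.range (l + 1),
      (1 : ℚ) / ((Nat.factorial (l - k)) * ∏ j ∈ Finset.range (k + 1), ((n : ℚ) - 1 - j)) =
    1 / ((Nat.factorial l) * ((n : ℚ) - l - 1)) := by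
  induction l generalizing n with
  | zero =>
    simp [Nat.factorial]
  | succ l IH =>
    have hn3 : 3 ≤ n := by omega
    have hln : l + 3 ≤ n := by omega
    have hlnQ : (l : ℚ) + 3 ≤ (n : ℚ) := by exact_mod_cast hln
    have hcast : ((n - 1 : ℕ) : ℚ) = (n : ℚ) - 1 := by
      rw [Nat.cast_sub (by omega)]; norm_num
    have key := IH (n - 1) (by omega) (by omega)
    rw [hcast] at key
    have hne1 : (n : ℚ) - 1 ≠ 0 := by intro h; nlinarith
    have hne2 : (n : ℚ) - (l : ℚ) - 2 ≠ 0 := by intro h; nlinarith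
    have hfac : ((Nat.factorial l : ℚ)) ≠ 0 := by
      exact_mod_cast Nat.factorial_ne_zero l
    have hfac1 : ((Nat.factorial (l + 1) : ℚ)) ≠ 0 := by
      exact_mod_cast Nat.factorial_ne_zero (l + 1)
    rw [Finset.sum_range_succ']
    have e1 : ∀ k ∈ Finset.range (l + 1),
        (1 : ℚ) / ((Nat.factorial (l + 1 - (k + 1))) *
          ∏ j ∈ Finset.range (k + 1 + 1), ((n : ℚ) - 1 - j)) =
        (1 / ((n : ℚ) - 1)) *
          ((1 : ℚ) / ((Nat.factorial (l - k)) *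
            ∏ j ∈ Finset.range (k + 1), ((n : ℚ) - 1 - 1 - j))) := by
      intro k _
      have hp : ∏ j ∈ Finset.range (k + 1 + 1), ((n : ℚ) - 1 - j) =
          (∏ j ∈ Finset.range (k + 1), ((n : ℚ) - 1 - 1 - j)) * ((n : ℚ) - 1) := by
        rw [Finset.prod_range_succ']
        congr 1
        · exact Finset.prod_congr rfl (fun j _ => by push_cast; ring)
        · norm_num
      rw [hp, Nat.succ_sub_succ]
      simp [one_div, mul_inv]
      ring
    rw [Finset.sum_congr rfl e1, ← Finset.mul_sum, key]
    have hA : (n : ℚ) - 1 - (l : ℚ) - 1 ≠ 0 := by intro h; apply hne2; linarith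
    have hB : (n : ℚ) - ((l : ℚ) + 1) - 1 ≠ 0 := by intro h; apply hne2; linarith
    simp only [Nat.sub_zero, zero_add, Finset.prod_range_one, Nat.cast_zero, sub_zero]
    push_cast [Nat.factorial_succ]
    field_simp
    ring
end

section
/- The Hadamard finite-part integral f.p.∫_0^∞ x^{-n}/(1+x²) dx equals (π/2)·(-1)^m when n = 2m is even, and equals 0 when n = 2m+1 is odd, for n ≥ 1. -/
open Real MeasureTheory Filter Set Finset

lemma fp_ne (x : ℝ) : ((x : ℂ) - Complex.I) ≠ 0 := by
  intro h
  have := congrArg Complex.im h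
  simp at this

lemma fp_iter_h (k : ℕ) :
    iteratedDeriv k (fun x : ℝ => ((x : ℂ) - Complex.I)⁻¹)
      = fun x : ℝ => (-1) ^ k * (Nat.factorial k : ℂ) * ((x : ℂ) - Complex.I) ^ (-1 - k : ℤ) := by
  induction k with
  | zero =>
    funext x
    simp [zpow_neg]
  | succ k ih =>
    rw [iteratedDeriv_succ, ih]
    funext x
    have hz : HasDerivAt (fun z : ℂ => (z - Complex.I) ^ (-1 - k : ℤ))
        (((-1 - k : ℤ) * ((x : ℂ) - Complex.I) ^ (-1 - k - 1 : ℤ)) * 1) ((x : ℝ) : ℂ) :=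
      HasDerivAt.comp (x : ℂ) (hasDerivAt_zpow (-1 - k) _ (Or.inl (fp_ne x)))
        ((hasDerivAt_id _).sub_const _)
    have h1 : HasDerivAt (fun x : ℝ => ((x : ℂ) - Complex.I) ^ (-1 - k : ℤ))
        (((-1 - k : ℤ) * ((x : ℂ) - Complex.I) ^ (-1 - k - 1 : ℤ)) * 1) x :=
      hz.comp_ofReal
    have h2 := (h1.const_mul ((-1) ^ k * (Nat.factorial k : ℂ))).deriv
    rw [h2]
    push_cast [Nat.factorial_succ]
    ring_nf

lemma fp_im_deriv {g : ℝ → ℂ} {g' : ℂ} {x : ℝ} (h : HasDerivAt g g' x) :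
    HasDerivAt (fun x => (g x).im) g'.im x := by
  exact Complex.imCLM.hasFDerivAt.comp_hasDerivAt x h

lemma fp_iter_f (k : ℕ) :
    iteratedDeriv k (fun x : ℝ => 1 / (1 + x ^ 2))
      = fun x : ℝ =>
        ((-1) ^ k * (Nat.factorial k : ℂ) * ((x : ℂ) - Complex.I) ^ (-1 - k : ℤ)).im := by
  induction k with
  | zero =>
    funext x
    rw [iteratedDeriv_zero]
    have h2 : ((x : ℂ) - Complex.I)⁻¹.im = 1 / (1 + x ^ 2) := by
      rw [Complex.inv_im]
      simp [Complex.normSq_apply]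
      ring
    simp only [pow_zero, Nat.factorial_zero, Nat.cast_one, one_mul, Nat.cast_zero, neg_zero]
    norm_num
    rw [Complex.normSq_apply]
    simp
    ring
  | succ k ih =>
    rw [iteratedDeriv_succ, ih]
    funext x
    have hz : HasDerivAt (fun z : ℂ => (z - Complex.I) ^ (-1 - k : ℤ))
        (((-1 - k : ℤ) * ((x : ℂ) - Complex.I) ^ (-1 - k - 1 : ℤ)) * 1) ((x : ℝ) : ℂ) :=
      HasDerivAt.comp (x : ℂ) (hasDerivAt_zpow (-1 - k) _ (Or.inl (fp_ne x)))
        ((hasDerivAt_id _).sub_const _)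
    have h1 := (hz.comp_ofReal.const_mul ((-1) ^ k * (Nat.factorial k : ℂ)))
    have h2 := (fp_im_deriv h1).deriv
    rw [h2]
    congr 1
    push_cast [Nat.factorial_succ]
    ring_nf

lemma fp_iter_f_zero (k : ℕ) :
    iteratedDeriv k (fun x : ℝ => 1 / (1 + x ^ 2)) 0
      = if k % 2 = 0 then (-1 : ℝ) ^ (k / 2) * Nat.factorial k else 0 := by
  rw [fp_iter_f]
  simp only []
  have hI : ((0 : ℝ) : ℂ) - Complex.I = Complex.I⁻¹ := by
    simp [Complex.inv_I]
  rw [show ((0:ℝ):ℂ) = (0:ℂ) from rfl, zero_sub, show (-Complex.I) = Complex.I⁻¹ by simp [Complex.inv_I], inv_zpow, ← zpow_neg]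
  have : (-(-1 - k) : ℤ) = (k + 1 : ℕ) := by push_cast; ring
  rw [this, zpow_natCast]
  rcases Nat.even_or_odd k with ⟨m, rfl⟩ | ⟨m, rfl⟩
  · have hk : m + m = 2 * m := by ring
    rw [hk]
    have : Complex.I ^ (2 * m + 1) = (-1) ^ m * Complex.I := by
      rw [pow_succ, pow_mul, Complex.I_sq]
    rw [this]
    have h1 : ((-1:ℂ))^(2*m) * ((2*m).factorial : ℂ) * ((-1:ℂ)^m * Complex.I)
        = (((-1:ℝ)^(2*m) * ((2*m).factorial : ℝ) * (-1:ℝ)^m : ℝ) : ℂ) * Complex.I := by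
      push_cast; ring
    rw [h1, Complex.mul_I_im, Complex.ofReal_re]
    simp [Nat.mul_mod_right, Nat.mul_div_cancel_left]
    ring
  · have : Complex.I ^ (2 * m + 1 + 1) = (-1) ^ (m + 1) := by
      rw [show 2 * m + 1 + 1 = 2 * (m + 1) by ring, pow_mul, Complex.I_sq]
    rw [this]
    have h1 : ((-1:ℂ))^(2*m+1) * ((2*m+1).factorial : ℂ) * ((-1:ℂ)^(m+1))
        = (((-1:ℝ)^(2*m+1) * ((2*m+1).factorial : ℝ) * (-1:ℝ)^(m+1) : ℝ) : ℂ) := by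
      push_cast; ring
    rw [h1, Complex.ofReal_im]
    simp [Nat.add_mod, Nat.mul_mod_right]

lemma fp_integrableOn (n : ℕ) {ε : ℝ} (hε : 0 < ε) :
    IntegrableOn (fun x : ℝ => 1 / (1 + x ^ 2) / x ^ n) (Ioi ε) := by
  have hg : Integrable (fun x : ℝ => (ε ^ n)⁻¹ * (1 + x ^ 2)⁻¹) (volume.restrict (Ioi ε)) :=
    integrable_inv_one_add_sq.restrict.const_mul _
  refine hg.mono' ?_ ?_
  · apply Measurable.aestronglyMeasurable
    apply Measurable.div
    · exact (measurable_const.div ((measurable_id.pow_const 2).const_add 1))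
    · exact measurable_id.pow_const n
  · filter_upwards [ae_restrict_mem measurableSet_Ioi] with x hx
    have hx0 : 0 < x := hε.trans hx
    have h1 : (x ^ n)⁻¹ ≤ (ε ^ n)⁻¹ := by
      gcongr
      exact hx.le
    have h2 : ‖1 / (1 + x ^ 2) / x ^ n‖ = (1 + x ^ 2)⁻¹ * (x ^ n)⁻¹ := by
      rw [Real.norm_eq_abs, abs_of_nonneg (by positivity), one_div, div_eq_mul_inv]
    rw [h2, mul_comm ((ε ^ n)⁻¹) ((1 + x ^ 2)⁻¹)]
    exact mul_le_mul_of_nonneg_left h1 (by positivity)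

lemma fp_integrableOn_pow (n : ℕ) {ε : ℝ} (hε : 0 < ε) :
    IntegrableOn (fun x : ℝ => ((x : ℝ) ^ (n + 2))⁻¹) (Ioi ε) := by
  refine IntegrableOn.congr_fun
    (Integrable.add (fp_integrableOn (n + 2) hε) (fp_integrableOn n hε))
    (fun x hx => ?_) measurableSet_Ioi
  have hx0 : 0 < x := hε.trans hx
  have h1 : (1 : ℝ) + x ^ 2 ≠ 0 := by positivity
  simp only [Pi.add_apply]
  field_simp
  ring

lemma fp_integral_pow (n : ℕ) {ε : ℝ} (hε : 0 < ε) :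
    ∫ x in Ioi ε, ((x : ℝ) ^ (n + 2))⁻¹ = (ε ^ (n + 1))⁻¹ / (n + 1) := by
  have hInt := fp_integrableOn_pow n hε
  have hderiv : ∀ x ∈ Ici ε, HasDerivAt (fun x : ℝ => -(x ^ (n + 1))⁻¹ / (n + 1))
      ((x ^ (n + 2))⁻¹) x := by
    intro x hx
    have hx0 : (0 : ℝ) < x := lt_of_lt_of_le hε hx
    have h := (hasDerivAt_zpow (-((n + 1 : ℕ) : ℤ)) x (Or.inl hx0.ne')).const_mul
      (-(1 / ((n : ℝ) + 1)))
    have h : HasDerivAt (fun y : ℝ => -(1 / ((n : ℝ) + 1)) * y ^ (-((n + 1 : ℕ) : ℤ)))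
        (-(1 / ((n : ℝ) + 1)) * (((-((n + 1 : ℕ) : ℤ) : ℤ) : ℝ) * x ^ (-((n + 1 : ℕ) : ℤ) - 1))) x := h
    convert h using 1
    · funext y
      rw [zpow_neg, zpow_natCast]
      push_cast
      ring
    · have he : (-((n + 1 : ℕ) : ℤ) - 1) = -(((n + 2 : ℕ) : ℤ)) := by push_cast; ring
      rw [he, zpow_neg, zpow_natCast]
      have hn1 : ((n : ℝ) + 1) ≠ 0 := by positivity
      push_cast
      field_simp
  have htend : Tendsto (fun x : ℝ => -(x ^ (n + 1))⁻¹ / (n + 1)) atTop (nhds 0) := by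
    have h1 : Tendsto (fun x : ℝ => x ^ (n + 1)) atTop atTop :=
      tendsto_pow_atTop (Nat.succ_ne_zero n)
    have h2 := h1.inv_tendsto_atTop
    have h3 := (h2.neg).div_const ((n : ℝ) + 1)
    simpa using h3
  rw [integral_Ioi_of_hasDerivAt_of_tendsto' hderiv hInt htend]
  push_cast
  ring

lemma fp_J : ∀ (n : ℕ) (ε : ℝ), 0 < ε →
    (∫ x in Ioi ε, 1 / (1 + x ^ 2) / x ^ n)
      = (∑ k ∈ Finset.range (n - 1),
          if k % 2 = 0 then (-1 : ℝ) ^ (k / 2) * ε ^ ((k : ℤ) + 1 - n) / ((n : ℝ) - 1 - k) else 0)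
        + (-1 : ℝ) ^ (n / 2) *
          (if n % 2 = 0 then π / 2 - arctan ε
           else 1 / 2 * Real.log (1 + ε ^ 2) - Real.log ε)
  | 0, ε, hε => by
      simp only [pow_zero, div_one, one_div]
      rw [integral_Ioi_inv_one_add_sq]
      simp
  | 1, ε, hε => by
      have hG : ∀ x ∈ Ici ε, HasDerivAt (fun x : ℝ => Real.log x - 1/2 * Real.log (1 + x^2))
          (1 / (1 + x ^ 2) / x ^ 1) x := by
        intro x hx
        have hx0 : 0 < x := lt_of_lt_of_le hε hx
        have h1 := Real.hasDerivAt_log hx0.ne'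
        have hin : HasDerivAt (fun x : ℝ => 1 + x^2) (2*x) x := by
          simpa using ((hasDerivAt_pow 2 x).const_add 1)
        have h2 := (Real.hasDerivAt_log (by positivity : (1:ℝ)+x^2 ≠ 0)).comp x hin
        have h3 := h1.sub (h2.const_mul (1/2))
        have h3 : HasDerivAt (fun x : ℝ => Real.log x - 1/2 * Real.log (1 + x^2))
            (x⁻¹ - 1 / 2 * ((1 + x ^ 2)⁻¹ * (2 * x))) x := h3
        convert h3 using 1
        have hne : (1:ℝ) + x^2 ≠ 0 := by positivity
        field_simp
        ring
      have htend : Tendsto (fun x : ℝ => Real.log x - 1/2 * Real.log (1 + x^2))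
          atTop (nhds 0) := by
        have t0 : Tendsto (fun x : ℝ => (x⁻¹)^2 + 1) atTop (nhds 1) := by
          have h := ((tendsto_inv_atTop_zero (𝕜 := ℝ)).pow 2).add_const (1:ℝ)
          simpa using h
        have t1 : Tendsto (fun x : ℝ => -(1/2) * Real.log ((x⁻¹)^2 + 1)) atTop (nhds 0) := by
          have tl := (Real.continuousAt_log (by norm_num : (1:ℝ) ≠ 0)).tendsto.comp t0
          have := tl.const_mul (-(1/2):ℝ)
          simpa using this
        refine t1.congr' ?_
        filter_upwards [eventually_gt_atTop 0] with x hx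
        have hx2 : (x:ℝ)^2 ≠ 0 := by positivity
        have h4 : (x⁻¹)^2 + 1 = (1 + x^2)/x^2 := by field_simp
        rw [h4, Real.log_div (by positivity) hx2, Real.log_pow]
        push_cast
        ring
      have hFTC := integral_Ioi_of_hasDerivAt_of_tendsto' hG (fp_integrableOn 1 hε) htend
      rw [hFTC]
      norm_num
  | (n+2), ε, hε => by
      have IH := fp_J n ε hε
      have hsplit : (∫ x in Ioi ε, 1 / (1 + x ^ 2) / x ^ (n+2))
          = (∫ x in Ioi ε, (((x:ℝ) ^ (n+2))⁻¹ - 1 / (1 + x ^ 2) / x ^ n)) := by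
        refine setIntegral_congr_fun measurableSet_Ioi fun x hx => ?_
        have hx0 : 0 < x := hε.trans hx
        have hne : (1:ℝ) + x^2 ≠ 0 := by positivity
        field_simp
        ring
      rw [hsplit, integral_sub (fp_integrableOn_pow n hε) (fp_integrableOn n hε),
        fp_integral_pow n hε, IH]
      have hmod : (n + 2) % 2 = n % 2 := Nat.add_mod_right n 2
      have hdiv : (n + 2) / 2 = n / 2 + 1 := Nat.add_div_right n (by norm_num)
      have hterm : ∀ k : ℕ,
          (if (k+2) % 2 = 0 then
            (-1 : ℝ) ^ ((k+2) / 2) * ε ^ (((k+2 : ℕ) : ℤ) + 1 - ((n+2 : ℕ) : ℤ))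
              / (((n+2 : ℕ) : ℝ) - 1 - ((k+2 : ℕ) : ℝ)) else 0)
          = -(if k % 2 = 0 then
              (-1 : ℝ) ^ (k / 2) * ε ^ ((k : ℤ) + 1 - n) / ((n : ℝ) - 1 - k) else 0) := by
        intro k
        have h2 : (k+2) % 2 = k % 2 := Nat.add_mod_right k 2
        have h3 : (k+2) / 2 = k / 2 + 1 := Nat.add_div_right k (by norm_num)
        rw [h2, h3]
        by_cases hk : k % 2 = 0
        · rw [if_pos hk, if_pos hk, pow_succ,
            show (((k+2 : ℕ) : ℤ) + 1 - ((n+2 : ℕ) : ℤ)) = ((k : ℤ) + 1 - n) by push_cast; ring,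
            show (((n+2 : ℕ) : ℝ) - 1 - ((k+2 : ℕ) : ℝ)) = ((n : ℝ) - 1 - k) by push_cast; ring]
          ring
        · rw [if_neg hk, if_neg hk, neg_zero]
      have hsum : (∑ k ∈ Finset.range (n + 2 - 1),
            if k % 2 = 0 then (-1 : ℝ) ^ (k / 2) * ε ^ ((k : ℤ) + 1 - ((n+2 : ℕ) : ℤ))
              / (((n+2 : ℕ) : ℝ) - 1 - k) else 0)
          = (ε ^ (n + 1))⁻¹ / ((n : ℝ) + 1)
            - ∑ k ∈ Finset.range (n - 1),
              (if k % 2 = 0 then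
                (-1 : ℝ) ^ (k / 2) * ε ^ ((k : ℤ) + 1 - n) / ((n : ℝ) - 1 - k) else 0) := by
        cases n with
        | zero =>
            norm_num
        | succ m =>
            rw [show m + 1 + 2 - 1 = m + 1 + 1 by omega, Finset.sum_range_succ',
              Finset.sum_range_succ']
            have hg1 : (if (0+1) % 2 = 0 then
                (-1 : ℝ) ^ ((0+1) / 2) * ε ^ (((0+1 : ℕ) : ℤ) + 1 - ((m+1+2 : ℕ) : ℤ))
                  / (((m+1+2 : ℕ) : ℝ) - 1 - ((0+1 : ℕ) : ℝ)) else 0) = 0 := by norm_num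
            have hsum2 : (∑ k ∈ Finset.range m,
                if (k+1+1) % 2 = 0 then
                  (-1 : ℝ) ^ ((k+1+1) / 2) * ε ^ (((k+1+1 : ℕ) : ℤ) + 1 - ((m+1+2 : ℕ) : ℤ))
                    / (((m+1+2 : ℕ) : ℝ) - 1 - ((k+1+1 : ℕ) : ℝ)) else 0)
                = -∑ k ∈ Finset.range m,
                  (if k % 2 = 0 then
                    (-1 : ℝ) ^ (k / 2) * ε ^ ((k : ℤ) + 1 - ((m+1 : ℕ) : ℤ))
                      / (((m+1 : ℕ) : ℝ) - 1 - k) else 0) := by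
              rw [← Finset.sum_neg_distrib]
              refine Finset.sum_congr rfl fun k _ => ?_
              have h5 := hterm k
              rw [show k+1+1 = k+2 by omega]
              exact h5
            rw [hg1, add_zero, hsum2]
            norm_num
            rw [show ((1 : ℤ) - ((m:ℤ) + 1 + 2)) = -(((m+2 : ℕ)) : ℤ) by push_cast; ring,
              zpow_neg, zpow_natCast]
            push_cast
            ring
      rw [hmod, hdiv, pow_succ, hsum]
      ring

/-- `IsFinitePart n f L` : the Hadamard finite-part integral
`f.p.∫₀^∞ x^{-n} f(x) dx` exists and equals `L`. -/
def IsFinitePart (n : ℕ) (f : ℝ → ℝ) (L : ℝ) : Prop :=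
  Tendsto (fun ε : ℝ =>
      (∫ x in Ioi ε, f x / x ^ n)
        - ∑ k ∈ Finset.range (n - 1),
            ε ^ ((k : ℤ) + 1 - n) * iteratedDeriv k f 0 / (Nat.factorial k * (n - 1 - k : ℝ))
        + Real.log ε / (Nat.factorial (n - 1)) * iteratedDeriv (n - 1) f 0)
    (nhdsWithin 0 (Ioi 0)) (nhds L)

theorem stmt_5 (n : ℕ) (hn : 1 ≤ n) :
    IsFinitePart n (fun x => 1 / (1 + x ^ 2))
      (if n % 2 = 0 then (π / 2) * (-1 : ℝ) ^ (n / 2) else 0) := by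
  unfold IsFinitePart
  have key : ∀ ε : ℝ, ε ∈ Ioi (0:ℝ) →
      ((∫ x in Ioi ε, (fun x : ℝ => 1 / (1 + x ^ 2)) x / x ^ n)
        - ∑ k ∈ Finset.range (n - 1),
            ε ^ ((k : ℤ) + 1 - n) * iteratedDeriv k (fun x : ℝ => 1 / (1 + x ^ 2)) 0
              / (Nat.factorial k * (n - 1 - k : ℝ))
        + Real.log ε / (Nat.factorial (n - 1))
            * iteratedDeriv (n - 1) (fun x : ℝ => 1 / (1 + x ^ 2)) 0)
      = (-1 : ℝ) ^ (n / 2) *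
          (if n % 2 = 0 then π / 2 - arctan ε else 1 / 2 * Real.log (1 + ε ^ 2)) := by
    intro ε hε
    rw [Set.mem_Ioi] at hε
    have hsum : (∑ k ∈ Finset.range (n - 1),
        ε ^ ((k : ℤ) + 1 - n) * iteratedDeriv k (fun x : ℝ => 1 / (1 + x ^ 2)) 0
          / (Nat.factorial k * (n - 1 - k : ℝ)))
        = ∑ k ∈ Finset.range (n - 1),
          (if k % 2 = 0 then
            (-1 : ℝ) ^ (k / 2) * ε ^ ((k : ℤ) + 1 - n) / ((n : ℝ) - 1 - k) else 0) := by
      refine Finset.sum_congr rfl fun k _ => ?_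
      rw [fp_iter_f_zero]
      by_cases hk : k % 2 = 0
      · rw [if_pos hk, if_pos hk]
        rcases eq_or_ne ((n:ℝ) - 1 - (k:ℝ)) 0 with h0 | h0
        · rw [h0]
          simp
        · have hfac : (Nat.factorial k : ℝ) ≠ 0 := by positivity
          field_simp
      · rw [if_neg hk, if_neg hk]
        simp
    simp only [] at *
    rw [hsum, fp_J n ε hε, fp_iter_f_zero (n - 1)]
    by_cases hpar : n % 2 = 0
    · rw [if_neg (by omega : ¬ (n - 1) % 2 = 0)]
      simp only [hpar, reduceIte]
      ring
    · rw [if_pos (by omega : (n - 1) % 2 = 0),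
        show (n - 1) / 2 = n / 2 by omega]
      simp only [hpar, reduceIte]
      have hfac : ((n - 1).factorial : ℝ) ≠ 0 := by positivity
      field_simp
      ring
  have heq : (fun ε : ℝ => (-1 : ℝ) ^ (n / 2) *
        (if n % 2 = 0 then π / 2 - arctan ε else 1 / 2 * Real.log (1 + ε ^ 2)))
      =ᶠ[nhdsWithin 0 (Ioi 0)]
      (fun ε : ℝ =>
        (∫ x in Ioi ε, (fun x : ℝ => 1 / (1 + x ^ 2)) x / x ^ n)
        - ∑ k ∈ Finset.range (n - 1),
            ε ^ ((k : ℤ) + 1 - n) * iteratedDeriv k (fun x : ℝ => 1 / (1 + x ^ 2)) 0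
              / (Nat.factorial k * (n - 1 - k : ℝ))
        + Real.log ε / (Nat.factorial (n - 1))
            * iteratedDeriv (n - 1) (fun x : ℝ => 1 / (1 + x ^ 2)) 0) := by
    filter_upwards [self_mem_nhdsWithin] with ε hε
    exact (key ε hε).symm
  refine Tendsto.congr' heq ?_
  by_cases hpar : n % 2 = 0
  · simp only [hpar, reduceIte]
    have hc : Tendsto (fun ε : ℝ => (-1 : ℝ) ^ (n / 2) * (π / 2 - arctan ε)) (nhds 0)
        (nhds ((-1 : ℝ) ^ (n / 2) * (π / 2 - arctan 0))) :=
      (continuous_const.mul (continuous_const.sub Real.continuous_arctan)).tendsto 0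
    rw [Real.arctan_zero, sub_zero, mul_comm] at hc
    exact hc.mono_left nhdsWithin_le_nhds
  · simp only [hpar, reduceIte]
    have h1 : Tendsto (fun ε : ℝ => 1 + ε ^ 2) (nhds 0) (nhds 1) := by
      have hc : Continuous (fun ε : ℝ => 1 + ε ^ 2) := by continuity
      have := hc.tendsto (0:ℝ)
      simpa using this
    have h2 := (Real.continuousAt_log one_ne_zero).tendsto.comp h1
    have h3 := (h2.const_mul (1/2 : ℝ)).const_mul ((-1 : ℝ) ^ (n / 2))
    have h4 : Tendsto (fun ε : ℝ => (-1 : ℝ) ^ (n / 2) * (1 / 2 * Real.log (1 + ε ^ 2)))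
        (nhds 0) (nhds 0) := by
      simpa using h3
    exact h4.mono_left nhdsWithin_le_nhds
end

section
/- The Hadamard finite-part integral f.p.∫_0^∞ x^{-2} e^{-x} dx equals −1 + γ. Equivalently, lim_{ε↓0} ( ∫_ε^∞ e^{-x}/x² dx − 1/ε − log ε ) = −1 + γ. -/
open Real MeasureTheory Filter Set

section aux
open Asymptotics Topology


lemma mellinConv : MellinConvergent (fun t => Real.log t • ((Real.exp (-t) : ℝ) : ℂ)) 1 := by
  refine (mellin_hasDerivAt_of_isBigO_rpow (E := ℂ) (a := 2) (b := 0) ?_ ?_ (by norm_num) ?_ (by norm_num)).1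
  · refine (Continuous.continuousOn ?_).locallyIntegrableOn measurableSet_Ioi
    exact Complex.continuous_ofReal.comp (Real.continuous_exp.comp continuous_neg)
  · rw [← isBigO_norm_left]
    simp_rw [Complex.norm_real, isBigO_norm_left]
    simpa only [neg_one_mul] using (isLittleO_exp_neg_mul_rpow_atTop zero_lt_one _).isBigO
  · simp_rw [neg_zero, Real.rpow_zero]
    refine isBigO_const_of_tendsto (?_ : Tendsto _ _ (𝓝 (1 : ℂ))) one_ne_zero
    rw [(by simp : (1 : ℂ) = Real.exp (-0))]
    exact (Complex.continuous_ofReal.comp (Real.continuous_exp.comp continuous_neg)).continuousWithinAt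

lemma logExpIntegrable : IntegrableOn (fun x => Real.log x * Real.exp (-x)) (Ioi (0:ℝ)) := by
  have h := mellinConv
  unfold MellinConvergent at h
  have h2 : IntegrableOn (fun t : ℝ => ((Real.log t * Real.exp (-t) : ℝ) : ℂ)) (Ioi (0:ℝ)) := by
    refine h.congr_fun ?_ measurableSet_Ioi
    intro t ht
    simp [Complex.cpow_zero, Complex.ofReal_mul, smul_eq_mul]
  have h3 := h2.re
  simp only [RCLike.re_to_complex, Complex.ofReal_re] at h3
  exact h3

lemma logExpIntegral : ∫ x in Ioi (0:ℝ), Real.log x * Real.exp (-x) = -Real.eulerMascheroniConstant := by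
  have h := Complex.hasDerivAt_GammaIntegral (s := 1) (by norm_num)
  have heq : (∫ t : ℝ in Ioi 0, (t:ℂ) ^ ((1:ℂ) - 1) * (Real.log t * Real.exp (-t)))
      = ((∫ x in Ioi (0:ℝ), Real.log x * Real.exp (-x) : ℝ) : ℂ) := by
    rw [show (∫ t : ℝ in Ioi 0, (t:ℂ) ^ ((1:ℂ) - 1) * (Real.log t * Real.exp (-t)))
        = ∫ t : ℝ in Ioi 0, ((Real.log t * Real.exp (-t) : ℝ) : ℂ) from
      setIntegral_congr_fun measurableSet_Ioi fun t ht => by simp [Complex.cpow_zero]]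
    exact integral_ofReal
  rw [heq] at h
  -- Complex.Gamma agrees with GammaIntegral near 1
  have hev : Complex.Gamma =ᶠ[𝓝 (1:ℂ)] Complex.GammaIntegral := by
    filter_upwards [IsOpen.mem_nhds (isOpen_lt continuous_const Complex.continuous_re)
      (by norm_num : (0:ℝ) < (1:ℂ).re)] with s hs
    exact Complex.Gamma_eq_integral hs
  have h2 : HasDerivAt Complex.Gamma ((∫ x in Ioi (0:ℝ), Real.log x * Real.exp (-x) : ℝ) : ℂ) 1 :=
    h.congr_of_eventuallyEq hev
  have h2' : HasDerivAt Complex.Gamma ((∫ x in Ioi (0:ℝ), Real.log x * Real.exp (-x) : ℝ) : ℂ)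
      ((1:ℝ):ℂ) := by rwa [Complex.ofReal_one]
  have h3 := h2'.real_of_complex
  have h4 : HasDerivAt Real.Gamma (∫ x in Ioi (0:ℝ), Real.log x * Real.exp (-x)) 1 := by
    simp only [Complex.ofReal_re] at h3
    refine h3.congr_of_eventuallyEq ?_
    filter_upwards with x
    rw [Complex.Gamma_ofReal, Complex.ofReal_re]
  have h5 := Real.hasDerivAt_Gamma_one
  have := h4.unique h5
  linarith [this]


lemma intExpDiv {ε : ℝ} (hε : 0 < ε) (n : ℕ) :
    IntegrableOn (fun x => Real.exp (-x) / x ^ n) (Ioi ε) := by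
  refine Integrable.mono' ((exp_neg_integrableOn_Ioi ε one_pos).div_const (ε ^ n)) ?_ ?_
  · refine (ContinuousOn.div (by fun_prop) (by fun_prop) fun x hx => ?_).aestronglyMeasurable
      measurableSet_Ioi
    exact pow_ne_zero _ (ne_of_gt (hε.trans hx))
  · filter_upwards [ae_restrict_mem measurableSet_Ioi] with x hx
    have hx0 : 0 < x := hε.trans hx
    rw [Real.norm_eq_abs, abs_of_nonneg (by positivity), neg_one_mul]
    gcongr
    exact le_of_lt hx

lemma hasDerivA {x : ℝ} (hx : 0 < x) :
    HasDerivAt (fun x => -(Real.exp (-x) / x)) (Real.exp (-x) / x + Real.exp (-x) / x ^ 2) x := by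
  have h1 : HasDerivAt (fun x : ℝ => Real.exp (-x)) (-Real.exp (-x)) x := by
    simpa using (hasDerivAt_neg x).exp
  have h2 := (h1.div (hasDerivAt_id x) (ne_of_gt hx)).neg
  refine h2.congr_deriv ?_
  simp only [id]
  field_simp
  ring

lemma hasDerivB {x : ℝ} (hx : 0 < x) :
    HasDerivAt (fun x => Real.log x * Real.exp (-x))
      (Real.exp (-x) / x - Real.log x * Real.exp (-x)) x := by
  have h1 : HasDerivAt (fun x : ℝ => Real.exp (-x)) (-Real.exp (-x)) x := by
    simpa using (hasDerivAt_neg x).exp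
  have h2 := (Real.hasDerivAt_log (ne_of_gt hx)).mul h1
  refine h2.congr_deriv ?_
  field_simp
  ring

lemma tendA : Tendsto (fun x : ℝ => -(Real.exp (-x) / x)) atTop (𝓝 0) := by
  rw [show (0:ℝ) = -0 by norm_num]
  exact (Real.tendsto_exp_neg_atTop_nhds_zero.div_atTop tendsto_id).neg

lemma tendB : Tendsto (fun x : ℝ => Real.log x * Real.exp (-x)) atTop (𝓝 0) := by
  have h := Real.tendsto_pow_mul_exp_neg_atTop_nhds_zero 1
  refine tendsto_of_tendsto_of_tendsto_of_le_of_le' tendsto_const_nhds h ?_ ?_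
  · filter_upwards [eventually_ge_atTop (1:ℝ)] with x hx
    have := Real.log_nonneg hx
    positivity
  · filter_upwards [eventually_ge_atTop (1:ℝ)] with x hx
    have : Real.log x ≤ x := (Real.log_le_sub_one_of_pos (by linarith)).trans (by linarith)
    simpa using mul_le_mul_of_nonneg_right this (Real.exp_pos _).le

lemma int1 {ε : ℝ} (hε : 0 < ε) : IntegrableOn (fun x => Real.exp (-x) / x) (Ioi ε) := by
  simpa [pow_one] using intExpDiv hε 1

lemma intL {ε : ℝ} (hε : 0 < ε) :
    IntegrableOn (fun x => Real.log x * Real.exp (-x)) (Ioi ε) :=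
  logExpIntegrable.mono_set (Ioi_subset_Ioi hε.le)

lemma eqA {ε : ℝ} (hε : 0 < ε) : (∫ x in Ioi ε, Real.exp (-x) / x ^ 2)
    = Real.exp (-ε) / ε - ∫ x in Ioi ε, Real.exp (-x) / x := by
  have hsum := integral_Ioi_of_hasDerivAt_of_tendsto'
    (f := fun x => -(Real.exp (-x) / x))
    (f' := fun x => Real.exp (-x) / x + Real.exp (-x) / x ^ 2)
    (fun x hx => hasDerivA (lt_of_lt_of_le hε hx))
    ((int1 hε).add (intExpDiv hε 2)) tendA
  rw [integral_add (int1 hε) (intExpDiv hε 2)] at hsum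
  linarith [hsum]

lemma eqB {ε : ℝ} (hε : 0 < ε) : (∫ x in Ioi ε, Real.exp (-x) / x)
    = (∫ x in Ioi ε, Real.log x * Real.exp (-x)) - Real.log ε * Real.exp (-ε) := by
  have hsum := integral_Ioi_of_hasDerivAt_of_tendsto'
    (f := fun x => Real.log x * Real.exp (-x))
    (f' := fun x => Real.exp (-x) / x - Real.log x * Real.exp (-x))
    (fun x hx => hasDerivB (lt_of_lt_of_le hε hx))
    ((int1 hε).sub (intL hε)) tendB
  rw [integral_sub (int1 hε) (intL hε)] at hsum
  linarith [hsum]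

lemma intL0 : IntegrableOn (fun x => Real.log x * Real.exp (-x)) (Ioi (0:ℝ)) := logExpIntegrable
lemma intVal : ∫ x in Ioi (0:ℝ), Real.log x * Real.exp (-x) = -Real.eulerMascheroniConstant := logExpIntegral

lemma T1 : Tendsto (fun ε : ℝ => (Real.exp (-ε) - 1) / ε) (𝓝[>] 0) (𝓝 (-1)) := by
  have hd : HasDerivAt (fun x : ℝ => Real.exp (-x)) (-1) 0 := by
    simpa using (hasDerivAt_neg (0:ℝ)).exp
  have h := hasDerivAt_iff_tendsto_slope.mp hd
  have h2 := h.mono_left (nhdsWithin_mono 0 (fun x hx => ne_of_gt hx))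
  refine h2.congr' ?_
  filter_upwards [self_mem_nhdsWithin] with ε (hε : 0 < ε)
  simp [slope_def_field]

lemma T2 : Tendsto (fun ε : ℝ => (Real.exp (-ε) - 1) * Real.log ε) (𝓝[>] 0) (𝓝 0) := by
  have h := T1.mul (tendsto_log_mul_rpow_nhdsGT_zero one_pos)
  rw [mul_zero] at h
  refine h.congr' ?_
  filter_upwards [self_mem_nhdsWithin] with ε (hε : 0 < ε)
  rw [Real.rpow_one]
  field_simp

lemma T3 : Tendsto (fun ε : ℝ => ∫ x in Ioi ε, Real.log x * Real.exp (-x)) (𝓝[>] 0)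
    (𝓝 (-Real.eulerMascheroniConstant)) := by
  let g : ℝ → ℝ := fun x => Real.log x * Real.exp (-x)
  have hIcc : IntegrableOn g (Icc (0:ℝ) 1) := by
    rw [integrableOn_Icc_iff_integrableOn_Ioc]
    exact intL0.mono_set Ioc_subset_Ioi_self
  have hcont := (intervalIntegral.continuousOn_primitive (μ := volume) hIcc) 0 (by norm_num)
  have hΦ0 : (∫ t in Ioc (0:ℝ) 0, g t) = 0 := by simp
  have hmem : Icc (0:ℝ) 1 ∈ 𝓝[>] (0:ℝ) := by
    filter_upwards [Ioo_mem_nhdsGT_of_mem (by norm_num : (0:ℝ) ∈ Ico (0:ℝ) 1)] with x hx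
    exact Ioo_subset_Icc_self hx
  have hle : 𝓝[>] (0:ℝ) ≤ 𝓝[Icc (0:ℝ) 1] 0 := nhdsWithin_le_of_mem hmem
  have hΦ : Tendsto (fun ε => ∫ t in Ioc (0:ℝ) ε, g t) (𝓝[>] 0) (𝓝 0) := by
    have := hcont.tendsto.mono_left hle
    rwa [hΦ0] at this
  have hconst := tendsto_const_nhds (x := ∫ x in Ioi (0:ℝ), g x) (f := 𝓝[>] (0:ℝ))
  have h := hconst.sub hΦ
  rw [sub_zero, intVal] at h
  refine h.congr' ?_
  filter_upwards [self_mem_nhdsWithin] with ε (hε : 0 < ε)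
  have hsplit : (∫ t in Ioc (0:ℝ) ε, g t) + ∫ x in Ioi ε, g x = ∫ x in Ioi (0:ℝ), g x := by
    rw [← setIntegral_union (Ioc_disjoint_Ioi le_rfl) measurableSet_Ioi
      (intL0.mono_set Ioc_subset_Ioi_self) (intL hε), Ioc_union_Ioi_eq_Ioi hε.le]
  show -Real.eulerMascheroniConstant - (∫ t in Ioc (0:ℝ) ε, g t) = ∫ x in Ioi ε, g x
  linarith [hsplit, intVal]

theorem stmt_7 :
    Tendsto (fun ε : ℝ => (∫ x in Ioi ε, Real.exp (-x) / x ^ 2) - 1 / ε - Real.log ε)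
      (nhdsWithin 0 (Ioi 0)) (nhds (-1 + Real.eulerMascheroniConstant)) := by
  have h := (T1.add T2).sub T3
  rw [add_zero, sub_neg_eq_add] at h
  refine h.congr' ?_
  filter_upwards [self_mem_nhdsWithin] with ε (hε : 0 < ε)
  rw [eqA hε, eqB hε]
  ring

end aux
end

section
/- Let f be analytic on a neighborhood of 0 with Taylor series ∑ f^{(k)}(0) z^k / k!, and let n ≥ 1. Then (1/2πi) ∮_{|z|=ε} z^{-n} f(z) log(−z) dz = (log ε)/(n-1)! · f^{(n-1)}(0) − ∑_{k=0}^{n-2} ε^{k-n+1} f^{(k)}(0)/(k!(n-1-k)) + O(ε) as ε ↓ 0, where log(−z) on the circle z = ε e^{iθ}, 0 ≤ θ ≤ 2π, means log ε + i(θ − π). -/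
open Real MeasureTheory Filter Set Finset Asymptotics

lemma int_exp_zero {m : ℤ} (hm : m ≠ 0) :
    ∫ θ in (0:ℝ)..(2*π), Complex.exp ((m:ℂ) * Complex.I * θ) = 0 := by
  have hc : (m:ℂ) * Complex.I ≠ 0 :=
    mul_ne_zero (Int.cast_ne_zero.2 hm) Complex.I_ne_zero
  rw [integral_exp_mul_complex hc]
  push_cast
  rw [show (m:ℂ) * Complex.I * (2*(π:ℂ)) = m * (2*π*Complex.I) by ring,
    Complex.exp_int_mul_two_pi_mul_I]
  simp

lemma int_theta_exp {m : ℤ} (hm : m ≠ 0) :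
    ∫ θ in (0:ℝ)..(2*π), (θ:ℂ) * Complex.exp ((m:ℂ) * Complex.I * θ)
      = 2*π/((m:ℂ)*Complex.I) := by
  set c : ℂ := (m:ℂ) * Complex.I with hcdef
  have hc : c ≠ 0 := mul_ne_zero (Int.cast_ne_zero.2 hm) Complex.I_ne_zero
  have D : ∀ θ : ℝ, HasDerivAt
      (fun t : ℝ => ((t:ℂ) * Complex.exp (c*t))/c - Complex.exp (c*t)/c^2)
      ((θ:ℂ) * Complex.exp (c*θ)) θ := by
    intro θ
    have h1 : HasDerivAt (fun z : ℝ => c * (z:ℂ)) c θ := by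
      have := ((hasDerivAt_id (θ:ℂ)).const_mul c).comp_ofReal
      simp only [mul_one, id] at this
      exact this
    have he : HasDerivAt (fun t : ℝ => Complex.exp (c * t)) (Complex.exp (c*θ) * c) θ :=
      (Complex.hasDerivAt_exp (c*θ)).comp θ h1
    have ht : HasDerivAt (fun t : ℝ => (t:ℂ)) 1 θ := Complex.ofRealCLM.hasDerivAt
    have := (((ht.mul he).div_const c).sub (he.div_const (c^2)))
    convert this using 1
    · rfl
    · rfl
    field_simp
    ring
  rw [intervalIntegral.integral_eq_sub_of_hasDerivAt (fun θ _ => D θ) ?_]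
  · have h2 : Complex.exp (c * (2*π:ℝ)) = 1 := by
      rw [show c * (2*π:ℝ) = m * (2*π*Complex.I) by rw [hcdef]; push_cast; ring]
      exact Complex.exp_int_mul_two_pi_mul_I m
    rw [h2]
    simp only [Complex.ofReal_zero, mul_zero, Complex.exp_zero, zero_mul, mul_one]
    push_cast
    field_simp
    ring
  · apply Continuous.intervalIntegrable
    fun_prop

lemma intJ (m : ℤ) (L : ℂ) :
    ∫ θ in (0:ℝ)..(2*π), Complex.exp ((m:ℂ) * Complex.I * θ) * (L + Complex.I * ((θ:ℂ) - π))
      = if m = 0 then 2*π*L else 2*π/(m:ℂ) := by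
  have key : ∀ θ:ℝ, Complex.exp ((m:ℂ) * Complex.I * θ) * (L + Complex.I * ((θ:ℂ) - π))
      = (L - Complex.I*π) * Complex.exp ((m:ℂ) * Complex.I * θ)
        + Complex.I * ((θ:ℂ) * Complex.exp ((m:ℂ) * Complex.I * θ)) := by
    intro θ; ring
  rw [intervalIntegral.integral_congr (fun θ _ => key θ)]
  rw [intervalIntegral.integral_add, intervalIntegral.integral_const_mul,
    intervalIntegral.integral_const_mul]
  · by_cases hm : m = 0
    · subst hm
      simp only [Int.cast_zero, zero_mul, Complex.exp_zero, mul_one, if_true]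
      rw [intervalIntegral.integral_const, intervalIntegral.integral_ofReal]
      simp only [integral_id]
      simp only [Complex.real_smul]
      push_cast
      ring
    · rw [int_exp_zero hm, int_theta_exp hm, if_neg hm]
      have : (m:ℂ) ≠ 0 := Int.cast_ne_zero.2 hm
      field_simp
      ring
  · apply Continuous.intervalIntegrable; fun_prop
  · apply Continuous.intervalIntegrable; fun_prop

lemma int_monomial (n k : ℕ) {ε : ℝ} (hε : 0 < ε) (L : ℂ) :
    (∫ θ in (0:ℝ)..(2*π),
      ((ε:ℂ) * Complex.exp (Complex.I*θ))^(-(n:ℤ)) * ((ε:ℂ)*Complex.exp (Complex.I*θ))^k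
        * (L + Complex.I*((θ:ℂ)-π)) * (Complex.I*(ε:ℂ)*Complex.exp (Complex.I*θ)))
      = Complex.I * (ε:ℂ)^((k:ℤ)-n+1) *
          (if ((k:ℤ)-n+1 : ℤ) = 0 then 2*π*L else 2*π/((((k:ℤ)-n+1 : ℤ)):ℂ)) := by
  set m : ℤ := (k:ℤ) - n + 1 with hm
  have hεc : (ε:ℂ) ≠ 0 := Complex.ofReal_ne_zero.2 hε.ne'
  have key : ∀ θ : ℝ,
      ((ε:ℂ) * Complex.exp (Complex.I*θ))^(-(n:ℤ)) * ((ε:ℂ)*Complex.exp (Complex.I*θ))^k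
        * (L + Complex.I*((θ:ℂ)-π)) * (Complex.I*(ε:ℂ)*Complex.exp (Complex.I*θ))
      = (Complex.I * (ε:ℂ)^m) *
          (Complex.exp ((m:ℂ) * Complex.I * θ) * (L + Complex.I*((θ:ℂ)-π))) := by
    intro θ
    have hz : (ε:ℂ) * Complex.exp (Complex.I*θ) ≠ 0 :=
      mul_ne_zero hεc (Complex.exp_ne_zero _)
    set z : ℂ := (ε:ℂ) * Complex.exp (Complex.I*θ) with hzdef
    have h1 : z^(-(n:ℤ)) * z^k * (L + Complex.I*((θ:ℂ)-π)) * (Complex.I*(ε:ℂ)*Complex.exp (Complex.I*θ))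
        = Complex.I * z^m * (L + Complex.I*((θ:ℂ)-π)) := by
      rw [show (Complex.I*(ε:ℂ)*Complex.exp (Complex.I*θ)) = Complex.I * z by rw [hzdef]; ring]
      rw [show z^m = z^(-(n:ℤ)) * z^k * z by
        rw [← zpow_natCast z k, ← zpow_add₀ hz, ← zpow_add_one₀ hz, hm]; ring_nf]
      ring
    rw [h1]
    have h2 : z^m = (ε:ℂ)^m * Complex.exp ((m:ℂ) * Complex.I * θ) := by
      rw [hzdef, mul_zpow, ← Complex.exp_int_mul]
      congr 2
      push_cast
      ring
    rw [h2]
    ring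
  rw [intervalIntegral.integral_congr (fun θ _ => key θ),
    intervalIntegral.integral_const_mul, intJ m L]

set_option maxHeartbeats 1000000 in
theorem stmt_11 (f : ℂ → ℂ) (n : ℕ) (hn : 1 ≤ n) (hf : AnalyticAt ℂ f 0) :
    (fun ε : ℝ =>
        (1 / (2 * π * Complex.I)) *
            (∫ θ in (0 : ℝ)..(2 * π),
              ((ε : ℂ) * Complex.exp (Complex.I * θ)) ^ (-(n : ℤ)) *
                f ((ε : ℂ) * Complex.exp (Complex.I * θ)) *
                ((Real.log ε : ℂ) + Complex.I * ((θ : ℂ) - π)) *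
                (Complex.I * (ε : ℂ) * Complex.exp (Complex.I * θ)))
          - (((Real.log ε : ℂ) / (Nat.factorial (n - 1)) * iteratedDeriv (n - 1) f 0)
              - ∑ k ∈ Finset.range (n - 1),
                  (ε : ℂ) ^ ((k : ℤ) - n + 1) * iteratedDeriv k f 0 /
                    ((Nat.factorial k : ℂ) * ((n : ℂ) - 1 - k))))
      =O[nhdsWithin 0 (Ioi 0)] (fun ε : ℝ => ε) := by
  obtain ⟨j, rfl⟩ : ∃ j, n = j + 1 := ⟨n - 1, (Nat.succ_pred_eq_of_pos hn).symm⟩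
  obtain ⟨p, r, hpr⟩ : ∃ p r, HasFPowerSeriesOnBall f p 0 r := by
    obtain ⟨p, rr, hr⟩ := hf; exact ⟨p, rr, hr⟩
  set c : ℕ → ℂ := fun k => p.coeff k with hcdef
  -- coefficients vs iterated derivatives
  have hD : ∀ k, iteratedDeriv k f 0 = (k.factorial : ℂ) * c k := by
    intro k
    have h1 := hpr.factorial_smul (y := (1:ℂ)) k
    have h2 : iteratedDeriv k f 0 = k.factorial • p k (fun _ => 1) := by
      rw [iteratedDeriv_eq_iteratedFDeriv]; exact h1.symm
    rw [h2, nsmul_eq_mul]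
    rfl
  -- Taylor remainder bound
  obtain ⟨C0, hC0⟩ := isBigO_iff.1 (hpr.hasFPowerSeriesAt.isBigO_sub_partialSum_pow (j+2))
  rw [Metric.eventually_nhds_iff] at hC0
  obtain ⟨δ, hδ, hC⟩ := hC0
  set C : ℝ := max C0 0 with hCdef
  have hCnn : 0 ≤ C := le_max_right _ _
  have hrem : ∀ y : ℂ, ‖y‖ < δ → ‖f y - ∑ k ∈ range (j+2), c k * y^k‖ ≤ C * ‖y‖^(j+2) := by
    intro y hy
    have h2 := hC (show dist y 0 < δ by simpa using hy)
    have h3 : p.partialSum (j+2) y = ∑ k ∈ range (j+2), c k * y^k := by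
      rw [FormalMultilinearSeries.partialSum]
      refine Finset.sum_congr rfl fun k _ => ?_
      rw [p.apply_eq_pow_smul_coeff, smul_eq_mul]; ring
    rw [zero_add, h3] at h2
    calc ‖f y - ∑ k ∈ range (j+2), c k * y^k‖ ≤ C0 * ‖(‖y‖^(j+2))‖ := h2
      _ ≤ C * ‖y‖^(j+2) := by
          rw [Real.norm_eq_abs, abs_of_nonneg (by positivity)]
          gcongr; exact le_max_left _ _
  -- continuity of f near 0
  obtain ⟨r', hr'pos, hr'lt⟩ := ENNReal.lt_iff_exists_nnreal_btwn.1 hpr.r_pos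
  have hcont : ∀ z : ℂ, ‖z‖ < (r':ℝ) → ContinuousAt f z := by
    intro z hz
    refine (hpr.analyticOnNhd z ?_).continuousAt
    rw [EMetric.mem_ball, edist_zero_right]
    calc (‖z‖₊ : ENNReal) < (r' : ENNReal) := by exact_mod_cast hz
      _ < r := hr'lt
  have hr'0 : (0:ℝ) < r' := by exact_mod_cast ENNReal.coe_pos.1 hr'pos
  set ρ : ℝ := min δ (min (r':ℝ) 1) with hρdef
  have hρ : 0 < ρ := lt_min hδ (lt_min hr'0 one_pos)
  rw [isBigO_iff]
  refine ⟨C * (1 + π) + ‖c (j+1)‖, ?_⟩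
  filter_upwards [Ioo_mem_nhdsGT_of_mem (show (0:ℝ) ∈ Ico 0 ρ from ⟨le_rfl, hρ⟩)]
    with ε hεmem
  obtain ⟨hε0, hερ⟩ := hεmem
  have hεδ : ε < δ := lt_of_lt_of_le hερ (min_le_left _ _)
  have hεr' : ε < r' := lt_of_lt_of_le hερ (le_trans (min_le_right _ _) (min_le_left _ _))
  have hε1 : ε ≤ 1 := le_of_lt (lt_of_lt_of_le hερ (le_trans (min_le_right _ _) (min_le_right _ _)))
  have hεc : (ε:ℂ) ≠ 0 := Complex.ofReal_ne_zero.2 hε0.ne'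
  have hzabs : ∀ θ:ℝ, ‖(ε:ℂ) * Complex.exp (Complex.I * θ)‖ = ε := by
    intro θ
    rw [norm_mul, Complex.norm_exp]
    simp [abs_of_pos hε0]
  have hzne : ∀ θ:ℝ, (ε:ℂ) * Complex.exp (Complex.I * θ) ≠ 0 :=
    fun θ => mul_ne_zero hεc (Complex.exp_ne_zero _)
  -- continuity of pieces
  have hcz : Continuous fun θ:ℝ => (ε:ℂ) * Complex.exp (Complex.I * θ) := by fun_prop
  have hzinv : Continuous fun θ:ℝ => ((ε:ℂ) * Complex.exp (Complex.I * θ))^(-(↑(j+1):ℤ)) := by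
    have h4 : (fun θ:ℝ => ((ε:ℂ) * Complex.exp (Complex.I * θ))^(-(↑(j+1):ℤ)))
        = fun θ:ℝ => (((ε:ℂ) * Complex.exp (Complex.I * θ))^(j+1))⁻¹ := by
      funext θ; rw [zpow_neg, zpow_natCast]
    rw [h4]
    exact (hcz.pow _).inv₀ fun θ => pow_ne_zero _ (hzne θ)
  have hLc : Continuous fun θ:ℝ => (Real.log ε : ℂ) + Complex.I * ((θ:ℂ) - π) := by fun_prop
  have hfz : Continuous fun θ:ℝ => f ((ε:ℂ) * Complex.exp (Complex.I * θ)) :=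
    continuous_iff_continuousAt.2 fun θ =>
      (hcont _ (by rw [hzabs]; exact hεr')).comp hcz.continuousAt
  have hPz : Continuous fun θ:ℝ => ∑ k ∈ range (j+2), c k * ((ε:ℂ) * Complex.exp (Complex.I * θ))^k := by
    apply continuous_finset_sum
    intro k _
    exact continuous_const.mul (hcz.pow k)
  have hIGR : IntervalIntegrable (fun θ:ℝ =>
      ((ε:ℂ) * Complex.exp (Complex.I * θ)) ^ (-(↑(j+1) : ℤ)) *
        (f ((ε:ℂ) * Complex.exp (Complex.I * θ))
          - ∑ k ∈ range (j+2), c k * ((ε:ℂ) * Complex.exp (Complex.I * θ))^k) *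
        ((Real.log ε : ℂ) + Complex.I * ((θ:ℂ) - π)) *
        (Complex.I * (ε:ℂ) * Complex.exp (Complex.I * θ))) volume 0 (2*π) := by
    apply Continuous.intervalIntegrable
    exact (((hzinv.mul (hfz.sub hPz)).mul hLc).mul (by fun_prop))
  have hIGP : IntervalIntegrable (fun θ:ℝ =>
      ∑ k ∈ range (j+2), c k *
        (((ε:ℂ) * Complex.exp (Complex.I*θ))^(-(↑(j+1):ℤ)) * ((ε:ℂ)*Complex.exp (Complex.I*θ))^k
          * ((Real.log ε : ℂ) + Complex.I*((θ:ℂ)-π)) * (Complex.I*(ε:ℂ)*Complex.exp (Complex.I*θ)))) volume 0 (2*π) := by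
    apply Continuous.intervalIntegrable
    apply continuous_finset_sum
    intro k _
    exact continuous_const.mul (((hzinv.mul (hcz.pow k)).mul hLc).mul (by fun_prop))
  -- split the integral
  have hIeq : (∫ θ in (0:ℝ)..(2*π),
        ((ε:ℂ) * Complex.exp (Complex.I * θ)) ^ (-(↑(j+1) : ℤ)) *
          f ((ε:ℂ) * Complex.exp (Complex.I * θ)) *
          ((Real.log ε : ℂ) + Complex.I * ((θ:ℂ) - π)) *
          (Complex.I * (ε:ℂ) * Complex.exp (Complex.I * θ)))
      = (∑ k ∈ range (j+2), c k * (Complex.I * (ε:ℂ)^((k:ℤ)-(j+1)+1) *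
          (if ((k:ℤ)-(j+1)+1 : ℤ) = 0 then 2*π*((Real.log ε : ℂ))
            else 2*π/((((k:ℤ)-(j+1)+1 : ℤ)):ℂ))))
        + ∫ θ in (0:ℝ)..(2*π),
            ((ε:ℂ) * Complex.exp (Complex.I * θ)) ^ (-(↑(j+1) : ℤ)) *
              (f ((ε:ℂ) * Complex.exp (Complex.I * θ))
                - ∑ k ∈ range (j+2), c k * ((ε:ℂ) * Complex.exp (Complex.I * θ))^k) *
              ((Real.log ε : ℂ) + Complex.I * ((θ:ℂ) - π)) *
              (Complex.I * (ε:ℂ) * Complex.exp (Complex.I * θ)) := by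
    have hpt : ∀ θ:ℝ,
        ((ε:ℂ) * Complex.exp (Complex.I * θ)) ^ (-(↑(j+1) : ℤ)) *
          f ((ε:ℂ) * Complex.exp (Complex.I * θ)) *
          ((Real.log ε : ℂ) + Complex.I * ((θ:ℂ) - π)) *
          (Complex.I * (ε:ℂ) * Complex.exp (Complex.I * θ))
        = (∑ k ∈ range (j+2), c k *
            (((ε:ℂ) * Complex.exp (Complex.I*θ))^(-(↑(j+1):ℤ)) * ((ε:ℂ)*Complex.exp (Complex.I*θ))^k
              * ((Real.log ε : ℂ) + Complex.I*((θ:ℂ)-π)) * (Complex.I*(ε:ℂ)*Complex.exp (Complex.I*θ))))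
          + ((ε:ℂ) * Complex.exp (Complex.I * θ)) ^ (-(↑(j+1) : ℤ)) *
              (f ((ε:ℂ) * Complex.exp (Complex.I * θ))
                - ∑ k ∈ range (j+2), c k * ((ε:ℂ) * Complex.exp (Complex.I * θ))^k) *
              ((Real.log ε : ℂ) + Complex.I * ((θ:ℂ) - π)) *
              (Complex.I * (ε:ℂ) * Complex.exp (Complex.I * θ)) := by
      intro θ
      have hs : (∑ k ∈ range (j+2), c k *
            (((ε:ℂ) * Complex.exp (Complex.I*θ))^(-(↑(j+1):ℤ)) * ((ε:ℂ)*Complex.exp (Complex.I*θ))^k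
              * ((Real.log ε : ℂ) + Complex.I*((θ:ℂ)-π)) * (Complex.I*(ε:ℂ)*Complex.exp (Complex.I*θ))))
          = ((ε:ℂ) * Complex.exp (Complex.I * θ)) ^ (-(↑(j+1) : ℤ)) *
              (∑ k ∈ range (j+2), c k * ((ε:ℂ) * Complex.exp (Complex.I * θ))^k) *
              ((Real.log ε : ℂ) + Complex.I * ((θ:ℂ) - π)) *
              (Complex.I * (ε:ℂ) * Complex.exp (Complex.I * θ)) := by
        rw [Finset.mul_sum, Finset.sum_mul, Finset.sum_mul]
        refine Finset.sum_congr rfl fun k _ => by ring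
      rw [hs]; ring
    rw [intervalIntegral.integral_congr (fun θ _ => hpt θ),
      intervalIntegral.integral_add hIGP hIGR]
    congr 1
    rw [intervalIntegral.integral_finset_sum]
    · refine Finset.sum_congr rfl fun k _ => ?_
      rw [intervalIntegral.integral_const_mul, int_monomial (j+1) k hε0]
      norm_cast
    · intro k _
      apply Continuous.intervalIntegrable
      exact continuous_const.mul (((hzinv.mul (hcz.pow k)).mul hLc).mul (by fun_prop))
  -- algebra: polynomial part minus main term
  have hπ : (π:ℂ) ≠ 0 := Complex.ofReal_ne_zero.2 Real.pi_ne_zero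
  have hterm : ∀ k ∈ range j,
      (1 / (2 * (π:ℂ) * Complex.I)) * (c k * (Complex.I * (ε:ℂ)^((k:ℤ)-(j+1)+1) *
          (if ((k:ℤ)-(j+1)+1 : ℤ) = 0 then 2*π*((Real.log ε : ℂ))
            else 2*π/((((k:ℤ)-(j+1)+1 : ℤ)):ℂ))))
      = -((ε : ℂ) ^ ((k : ℤ) - ((j+1:ℕ):ℤ) + 1) * iteratedDeriv k f 0 /
                    ((Nat.factorial k : ℂ) * (((j+1:ℕ) : ℂ) - 1 - k))) := by
    intro k hk
    rw [Finset.mem_range] at hk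
    have hm : ((k:ℤ)-(j+1)+1 : ℤ) ≠ 0 := by omega
    have hexp : ((k : ℤ) - ((j+1:ℕ):ℤ) + 1) = ((k:ℤ)-(j+1)+1 : ℤ) := by push_cast; ring
    rw [hexp, if_neg hm, hD k]
    have hjk : ((j:ℂ) - k) ≠ 0 := by
      rw [sub_ne_zero]
      exact_mod_cast hk.ne'
    have hfac : ((k.factorial : ℕ) : ℂ) ≠ 0 := Nat.cast_ne_zero.2 k.factorial_ne_zero
    have hcast1 : ((((k:ℤ)-(j+1)+1 : ℤ)):ℂ) = (k:ℂ) - j := by push_cast; ring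
    have hcast2 : (((j+1:ℕ) : ℂ) - 1 - k) = (j:ℂ) - k := by push_cast; ring
    rw [hcast1, hcast2]
    have hkj : ((k:ℂ) - j) ≠ 0 := by
      rw [sub_ne_zero]
      exact_mod_cast hk.ne
    field_simp
    ring
  have halg : (1 / (2 * (π:ℂ) * Complex.I)) *
        (∑ k ∈ range (j+2), c k * (Complex.I * (ε:ℂ)^((k:ℤ)-(j+1)+1) *
          (if ((k:ℤ)-(j+1)+1 : ℤ) = 0 then 2*π*((Real.log ε : ℂ))
            else 2*π/((((k:ℤ)-(j+1)+1 : ℤ)):ℂ))))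
      - (((Real.log ε : ℂ) / (Nat.factorial (j+1-1)) * iteratedDeriv (j+1-1) f 0)
              - ∑ k ∈ Finset.range (j+1-1),
                  (ε : ℂ) ^ ((k : ℤ) - ((j+1:ℕ):ℤ) + 1) * iteratedDeriv k f 0 /
                    ((Nat.factorial k : ℂ) * (((j+1:ℕ) : ℂ) - 1 - k)))
      = c (j+1) * ε := by
    have hred : j + 1 - 1 = j := rfl
    rw [hred, Finset.sum_range_succ, Finset.sum_range_succ, mul_add, mul_add, Finset.mul_sum,
      Finset.sum_congr rfl hterm, Finset.sum_neg_distrib]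
    have hifj : ((((j:ℕ):ℤ)-(j+1)+1 : ℤ) = 0) := by omega
    have hifj1 : (((((j+1:ℕ)):ℤ)-(j+1)+1 : ℤ) ≠ 0) := by push_cast; omega
    rw [if_pos hifj, if_neg hifj1]
    have hjz : (((j:ℕ):ℤ)-(j+1)+1 : ℤ) = 0 := hifj
    have hj1 : ((((j+1:ℕ)):ℤ)-(j+1)+1 : ℤ) = 1 := by push_cast; ring
    rw [hjz, hj1, hD j]
    have hzpow0 : (ε:ℂ)^(0:ℤ) = 1 := zpow_zero _
    have hzpow1 : (ε:ℂ)^(1:ℤ) = ε := zpow_one _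
    rw [hzpow0, hzpow1]
    have hfac : ((j.factorial : ℕ) : ℂ) ≠ 0 := Nat.cast_ne_zero.2 j.factorial_ne_zero
    have hI : Complex.I ≠ 0 := Complex.I_ne_zero
    push_cast
    field_simp
    ring
  rw [hIeq]
  have hrw : (1 / (2 * (π:ℂ) * Complex.I)) *
        ((∑ k ∈ range (j+2), c k * (Complex.I * (ε:ℂ)^((k:ℤ)-(j+1)+1) *
          (if ((k:ℤ)-(j+1)+1 : ℤ) = 0 then 2*π*((Real.log ε : ℂ))
            else 2*π/((((k:ℤ)-(j+1)+1 : ℤ)):ℂ))))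
          + ∫ θ in (0:ℝ)..(2*π), ((ε:ℂ) * Complex.exp (Complex.I * θ)) ^ (-(↑(j+1) : ℤ)) *
              (f ((ε:ℂ) * Complex.exp (Complex.I * θ))
                - ∑ k ∈ range (j+2), c k * ((ε:ℂ) * Complex.exp (Complex.I * θ))^k) *
              ((Real.log ε : ℂ) + Complex.I * ((θ:ℂ) - π)) *
              (Complex.I * (ε:ℂ) * Complex.exp (Complex.I * θ)))
      - (((Real.log ε : ℂ) / (Nat.factorial (j+1-1)) * iteratedDeriv (j+1-1) f 0)
              - ∑ k ∈ Finset.range (j+1-1),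
                  (ε : ℂ) ^ ((k : ℤ) - ((j+1:ℕ):ℤ) + 1) * iteratedDeriv k f 0 /
                    ((Nat.factorial k : ℂ) * (((j+1:ℕ) : ℂ) - 1 - k)))
      = (1 / (2 * (π:ℂ) * Complex.I)) * (∫ θ in (0:ℝ)..(2*π), ((ε:ℂ) * Complex.exp (Complex.I * θ)) ^ (-(↑(j+1) : ℤ)) *
              (f ((ε:ℂ) * Complex.exp (Complex.I * θ))
                - ∑ k ∈ range (j+2), c k * ((ε:ℂ) * Complex.exp (Complex.I * θ))^k) *
              ((Real.log ε : ℂ) + Complex.I * ((θ:ℂ) - π)) *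
              (Complex.I * (ε:ℂ) * Complex.exp (Complex.I * θ)))
        + c (j+1) * ε := by
    linear_combination halg
  rw [hrw]
  -- now bound the remainder
  have hlognn : 0 ≤ -Real.log ε := by
    have := Real.log_nonpos hε0.le hε1; linarith
  have hεlog : ε * (-Real.log ε) ≤ 1 := by
    have h1 : -Real.log ε ≤ ε⁻¹ - 1 := by
      have := Real.log_le_sub_one_of_pos (inv_pos.2 hε0)
      rwa [Real.log_inv] at this
    have h2 : ε * (-Real.log ε) ≤ ε * (ε⁻¹ - 1) := by nlinarith
    have h3 : ε * (ε⁻¹ - 1) = 1 - ε := by field_simp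
    linarith
  have hGRb : ∀ θ ∈ Set.uIoc (0:ℝ) (2*π), ‖((ε:ℂ) * Complex.exp (Complex.I * θ)) ^ (-(↑(j+1) : ℤ)) *
              (f ((ε:ℂ) * Complex.exp (Complex.I * θ))
                - ∑ k ∈ range (j+2), c k * ((ε:ℂ) * Complex.exp (Complex.I * θ))^k) *
              ((Real.log ε : ℂ) + Complex.I * ((θ:ℂ) - π)) *
              (Complex.I * (ε:ℂ) * Complex.exp (Complex.I * θ))‖ ≤ C * ε^2 * (-Real.log ε + π) := by
    intro θ hθ
    rw [Set.uIoc_of_le (by positivity : (0:ℝ) ≤ 2*π)] at hθ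
    have hθ1 : 0 < θ := hθ.1
    have hθ2 : θ ≤ 2*π := hθ.2
    have e1 : ‖((ε:ℂ) * Complex.exp (Complex.I * θ)) ^ (-(↑(j+1) : ℤ))‖ = ε^(-(↑(j+1):ℤ)) := by
      rw [norm_zpow, hzabs]
    have e2 : ‖f ((ε:ℂ) * Complex.exp (Complex.I * θ))
        - ∑ k ∈ range (j+2), c k * ((ε:ℂ) * Complex.exp (Complex.I * θ))^k‖ ≤ C * ε^(j+2) := by
      have h4 := hrem ((ε:ℂ) * Complex.exp (Complex.I * θ)) (by rw [hzabs]; exact hεδ)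
      rwa [hzabs] at h4
    have e3 : ‖(Real.log ε : ℂ) + Complex.I * ((θ:ℂ) - π)‖ ≤ -Real.log ε + π := by
      refine le_trans (norm_add_le _ _) ?_
      rw [norm_mul, Complex.norm_I, one_mul, Complex.norm_real, Real.norm_eq_abs,
        abs_of_nonpos (Real.log_nonpos hε0.le hε1)]
      have h5 : ((θ:ℂ) - ↑π) = ((θ - π : ℝ) : ℂ) := by push_cast; ring
      rw [h5, Complex.norm_real, Real.norm_eq_abs]
      have h6 : |θ - π| ≤ π := abs_le.2 ⟨by linarith, by linarith⟩
      linarith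
    have e4 : ‖Complex.I * (ε:ℂ) * Complex.exp (Complex.I * θ)‖ = ε := by
      rw [show Complex.I * (ε:ℂ) * Complex.exp (Complex.I * θ)
          = Complex.I * ((ε:ℂ) * Complex.exp (Complex.I * θ)) by ring,
        norm_mul, Complex.norm_I, one_mul, hzabs]
    calc ‖((ε:ℂ) * Complex.exp (Complex.I * θ)) ^ (-(↑(j+1) : ℤ)) *
              (f ((ε:ℂ) * Complex.exp (Complex.I * θ))
                - ∑ k ∈ range (j+2), c k * ((ε:ℂ) * Complex.exp (Complex.I * θ))^k) *
              ((Real.log ε : ℂ) + Complex.I * ((θ:ℂ) - π)) *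
              (Complex.I * (ε:ℂ) * Complex.exp (Complex.I * θ))‖
        = ε^(-(↑(j+1):ℤ)) * ‖f ((ε:ℂ) * Complex.exp (Complex.I * θ))
            - ∑ k ∈ range (j+2), c k * ((ε:ℂ) * Complex.exp (Complex.I * θ))^k‖ *
            ‖(Real.log ε : ℂ) + Complex.I * ((θ:ℂ) - π)‖ * ε := by
          rw [norm_mul, norm_mul, norm_mul, e1, e4]
      _ ≤ ε^(-(↑(j+1):ℤ)) * (C * ε^(j+2)) * (-Real.log ε + π) * ε := by
          gcongr <;> positivity
      _ = C * ε^2 * (-Real.log ε + π) := by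
          have h9 : ε^(-(↑(j+1):ℤ)) = (ε^(j+1))⁻¹ := by rw [zpow_neg, zpow_natCast]
          have hne : ε^(j+1) ≠ 0 := pow_ne_zero _ hε0.ne'
          rw [h9]
          field_simp
          ring
  have hIGb : ‖∫ θ in (0:ℝ)..(2*π), ((ε:ℂ) * Complex.exp (Complex.I * θ)) ^ (-(↑(j+1) : ℤ)) *
              (f ((ε:ℂ) * Complex.exp (Complex.I * θ))
                - ∑ k ∈ range (j+2), c k * ((ε:ℂ) * Complex.exp (Complex.I * θ))^k) *
              ((Real.log ε : ℂ) + Complex.I * ((θ:ℂ) - π)) *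
              (Complex.I * (ε:ℂ) * Complex.exp (Complex.I * θ))‖ ≤ (C * ε^2 * (-Real.log ε + π)) * |2*π - 0| :=
    intervalIntegral.norm_integral_le_of_norm_le_const hGRb
  have hnormc : ‖(1 / (2 * (π:ℂ) * Complex.I))‖ = 1/(2*π) := by
    rw [norm_div, norm_one, norm_mul, norm_mul, Complex.norm_I, mul_one, Complex.norm_real]
    norm_num [Real.norm_eq_abs, abs_of_pos Real.pi_pos]
  calc ‖(1 / (2 * (π:ℂ) * Complex.I)) * (∫ θ in (0:ℝ)..(2*π), ((ε:ℂ) * Complex.exp (Complex.I * θ)) ^ (-(↑(j+1) : ℤ)) *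
              (f ((ε:ℂ) * Complex.exp (Complex.I * θ))
                - ∑ k ∈ range (j+2), c k * ((ε:ℂ) * Complex.exp (Complex.I * θ))^k) *
              ((Real.log ε : ℂ) + Complex.I * ((θ:ℂ) - π)) *
              (Complex.I * (ε:ℂ) * Complex.exp (Complex.I * θ))) + c (j+1) * ε‖
      ≤ ‖(1 / (2 * (π:ℂ) * Complex.I))‖ * ‖∫ θ in (0:ℝ)..(2*π), ((ε:ℂ) * Complex.exp (Complex.I * θ)) ^ (-(↑(j+1) : ℤ)) *
              (f ((ε:ℂ) * Complex.exp (Complex.I * θ))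
                - ∑ k ∈ range (j+2), c k * ((ε:ℂ) * Complex.exp (Complex.I * θ))^k) *
              ((Real.log ε : ℂ) + Complex.I * ((θ:ℂ) - π)) *
              (Complex.I * (ε:ℂ) * Complex.exp (Complex.I * θ))‖ + ‖c (j+1)‖ * ε := by
        refine le_trans (norm_add_le _ _) ?_
        rw [norm_mul, norm_mul, Complex.norm_real, Real.norm_eq_abs, abs_of_pos hε0]
    _ ≤ (1/(2*π)) * ((C * ε^2 * (-Real.log ε + π)) * |2*π - 0|) + ‖c (j+1)‖ * ε := by
        rw [hnormc]
        gcongr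
    _ ≤ (C * (1 + π) + ‖c (j+1)‖) * ‖ε‖ := by
        rw [Real.norm_eq_abs, abs_of_pos hε0,
          show |2*π - 0| = 2*π by rw [sub_zero]; exact abs_of_pos (by positivity)]
        have h8 : (1/(2*π)) * ((C * ε^2 * (-Real.log ε + π)) * (2*π))
            = C * ε^2 * (-Real.log ε + π) := by
          have hpne : (π:ℝ) ≠ 0 := Real.pi_ne_zero
          field_simp
        rw [h8]
        nlinarith [mul_le_mul_of_nonneg_left hεlog (mul_nonneg hCnn hε0.le),
          mul_le_mul_of_nonneg_left hε1
            (mul_nonneg (mul_nonneg hCnn Real.pi_pos.le) hε0.le),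
          norm_nonneg (c (j+1)), hε0.le]
end
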